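/- Suppose A and B are compact subsets of ℝ and there exist points a_1, a_2 ∈ A and b_1, b_2 ∈ B with a_1 ≤ b_1 ≤ a_2 ≤ b_2. Then A and B are interleaved. Moreover, if min{b_1 − a_1, a_2 − b_1, b_2 − a_2} ≥ 2ε for some ε > 0, then A and B are ε-strongly interleaved. -/

import Mathlib

open Set

/-- Projection map: the value of the (0-indexed) digit sequence `a` in base `q`,
`π_q(a) = Σ_{j=0}^∞ a_j q^{-(j+1)}`. -/
noncomputable def piQ (q : ℝ) (a : ℕ → ℝ) : ℝ := ∑' j : ℕ, a j / q ^ (j + 1)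

/-- `a` is a sequence of digits in `{0,1}`. -/
def IsDigitSeq (a : ℕ → ℝ) : Prop := ∀ j, a j = 0 ∨ a j = 1

/-- `a` is a sequence of digits in `{-1,0,1}`. -/
def IsExtDigitSeq (a : ℕ → ℝ) : Prop := ∀ j, a j = -1 ∨ a j = 0 ∨ a j = 1

/-- The set of base-`q` expansions of `x`. -/
def SigmaSet (q x : ℝ) : Set (ℕ → ℝ) := {a | IsDigitSeq a ∧ piQ q a = x}

/-- The interval `I_q = [0, 1/(q-1)]`. -/
def Iq (q : ℝ) : Set ℝ := Set.Icc 0 (1 / (q - 1))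

/-- The switch region `J_q = [1/q, 1/(q(q-1))]`. -/
def Jq (q : ℝ) : Set ℝ := Set.Icc (1 / q) (1 / (q * (q - 1)))

/-- The set of points of `I_q` having exactly `m` base-`q` expansions. -/
def UqM (q : ℝ) (m : ℕ∞) : Set ℝ := {x | x ∈ Iq q ∧ (SigmaSet q x).encard = m}

/-- The set of points of `I_q` having a unique base-`q` expansion. -/
def Uq (q : ℝ) : Set ℝ := UqM q 1

/-- `B_m`: the set of bases `q ∈ (1,2)` for which some point has exactly `m` expansions. -/
def Bset (m : ℕ∞) : Set ℝ := {q | q ∈ Set.Ioo (1 : ℝ) 2 ∧ (UqM q m).Nonempty}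

/-- `x` is the `k`-Bonacci number: the root in `(1,2)` of `x^k = x^{k-1} + ⋯ + x + 1`. -/
def IsBonacci (k : ℕ) (x : ℝ) : Prop :=
  x ∈ Set.Ioo (1 : ℝ) 2 ∧ x ^ k = ∑ i ∈ Finset.range k, x ^ i

/-- `a` contains no occurrence of the word `01^k` as a consecutive block. -/
def AvoidsWord01 (k : ℕ) (a : ℕ → ℝ) : Prop :=
  ∀ i, ¬(a i = 0 ∧ ∀ j, 1 ≤ j → j ≤ k → a (i + j) = 1)

/-- `a` contains no occurrence of the word `10^k` as a consecutive block. -/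
def AvoidsWord10 (k : ℕ) (a : ℕ → ℝ) : Prop :=
  ∀ i, ¬(a i = 1 ∧ ∀ j, 1 ≤ j → j ≤ k → a (i + j) = 0)

/-- `S_k`: the set of `{0,1}`-sequences avoiding the words `01^k` and `10^k`. -/
def Sset (k : ℕ) : Set (ℕ → ℝ) := {a | IsDigitSeq a ∧ AvoidsWord01 k a ∧ AvoidsWord10 k a}

/-- `g_{q,k} = f_1^{-(k-1)} ∘ f_0^{-1}`, where `f_0^{-1}(y) = y/q` and `f_1^{-1}(y) = (y+1)/q`. -/
noncomputable def gMap (q : ℝ) (k : ℕ) (x : ℝ) : ℝ := (fun y => (y + 1) / q)^[k - 1] (x / q)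

/-- The maps `f_0(x) = qx` (for `b = false`) and `f_1(x) = qx - 1` (for `b = true`). -/
noncomputable def fDigit (q : ℝ) (b : Bool) (x : ℝ) : ℝ := if b then q * x - 1 else q * x

/-- `(a, b)` is a bounded gap of `C`: a bounded connected component of `ℝ \ C`. -/
def IsGap (C : Set ℝ) (a b : ℝ) : Prop :=
  a < b ∧ a ∈ C ∧ b ∈ C ∧ Set.Ioo a b ∩ C = ∅

/-- The left endpoint of the bridge of `C` lying immediately to the left of the gap `(a, b)`:
the right endpoint of the nearest gap to the left having diameter at least `b - a`
(or `min C` if there is no such gap). -/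
noncomputable def leftBridgeStart (C : Set ℝ) (a b : ℝ) : ℝ :=
  sSup ({sInf C} ∪ {d | ∃ c, IsGap C c d ∧ d ≤ a ∧ b - a ≤ d - c})

/-- The right endpoint of the bridge of `C` lying immediately to the right of the gap `(a, b)`. -/
noncomputable def rightBridgeEnd (C : Set ℝ) (a b : ℝ) : ℝ :=
  sInf ({sSup C} ∪ {c | ∃ d, IsGap C c d ∧ b ≤ c ∧ b - a ≤ d - c})

/-- The (Newhouse) thickness of a compact set `C ⊆ ℝ`: the infimum over all bounded gaps `G`
of the ratio of the length of the bridge on either side of `G` to the length of `G`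
(`∞` if `C` has no bounded gap). -/
noncomputable def thickness (C : Set ℝ) : ENNReal :=
  ⨅ p : {p : ℝ × ℝ // IsGap C p.1 p.2},
    ENNReal.ofReal
      (min ((p.1.1 - leftBridgeStart C p.1.1 p.1.2) / (p.1.2 - p.1.1))
        ((rightBridgeEnd C p.1.1 p.1.2 - p.1.2) / (p.1.2 - p.1.1)))

/-- `B` is contained in a gap of `A`, i.e. in a connected component of `ℝ \ A`. -/
def ContainedInGap (B A : Set ℝ) : Prop :=
  ∃ x ∈ Aᶜ, B ⊆ connectedComponentIn Aᶜ x

/-- Two sets are interleaved if neither is contained in a gap of the other. -/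
def Interleaved (A B : Set ℝ) : Prop :=
  ¬ContainedInGap B A ∧ ¬ContainedInGap A B

/-- `A` and `B` are `ε`-strongly interleaved: any compact sets within Hausdorff distance `ε`
of `A` and `B` respectively are interleaved. -/
def StronglyInterleaved (ε : ℝ) (A B : Set ℝ) : Prop :=
  ∀ A' B' : Set ℝ, IsCompact A' → IsCompact B' →
    EMetric.hausdorffEdist A A' ≤ ENNReal.ofReal ε →
    EMetric.hausdorffEdist B B' ≤ ENNReal.ofReal ε → Interleaved A' B'

/-- The sequence `0^{k-3}(01^{k-1})^∞` (0-indexed). -/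
noncomputable def seqG (k : ℕ) : ℕ → ℝ := fun j =>
  if j < k - 3 then 0 else if (j - (k - 3)) % k = 0 then 0 else 1

/-- The sequence `1^{k-3}(10^{k-1})^∞` (0-indexed). -/
noncomputable def seqH (k : ℕ) : ℕ → ℝ := fun j =>
  if j < k - 3 then 1 else if (j - (k - 3)) % k = 0 then 1 else 0

/-- The sequence `(1^{k-1}0)^∞` (0-indexed). -/
noncomputable def seqP (k : ℕ) : ℕ → ℝ := fun j => if j % k = k - 1 then 0 else 1


lemma not_containedInGap_of_between {A B : Set ℝ} {x y z : ℝ}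
    (hx : x ∈ A) (hz : z ∈ A) (hy : y ∈ B) (h1 : x ≤ y) (h2 : y ≤ z) :
    ¬ContainedInGap A B := by
  rintro ⟨w, hw, hsub⟩
  have hconn : IsPreconnected (connectedComponentIn Bᶜ w) :=
    (isPreconnected_connectedComponentIn)
  have hord := hconn.ordConnected
  have hyC : y ∈ connectedComponentIn Bᶜ w := hord.out (hsub hx) (hsub hz) ⟨h1, h2⟩
  exact (connectedComponentIn_subset _ _ hyC) hy

lemma exists_near_point {A A' : Set ℝ} (hA' : IsCompact A') {ε : ℝ} (hε : 0 ≤ ε)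
    (h : EMetric.hausdorffEdist A A' ≤ ENNReal.ofReal ε) {x : ℝ} (hx : x ∈ A) :
    ∃ x' ∈ A', |x - x'| ≤ ε := by
  have hne : A'.Nonempty := by
    refine EMetric.nonempty_of_hausdorffEdist_ne_top ⟨x, hx⟩ ?_
    exact fun ht => by simp [show EMetric.hausdorffEdist A A' = Metric.hausdorffEDist A A' from rfl, ht] at h
  obtain ⟨y, hy, hyd⟩ := hA'.exists_infEdist_eq_edist hne x
  refine ⟨y, hy, ?_⟩
  have h1 : EMetric.infEdist x A' ≤ ENNReal.ofReal ε :=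
    le_trans (EMetric.infEdist_le_hausdorffEdist_of_mem hx) h
  rw [show EMetric.infEdist x A' = Metric.infEDist x A' from rfl, hyd, edist_dist] at h1
  have := (ENNReal.ofReal_le_ofReal_iff hε).1 h1
  simpa [Real.dist_eq] using this

theorem interleaving_of_separated_points
    (A B : Set ℝ) (hA : IsCompact A) (hB : IsCompact B)
    (a1 a2 b1 b2 : ℝ) (ha1 : a1 ∈ A) (ha2 : a2 ∈ A) (hb1 : b1 ∈ B) (hb2 : b2 ∈ B)
    (h1 : a1 ≤ b1) (h2 : b1 ≤ a2) (h3 : a2 ≤ b2) :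
    Interleaved A B ∧
      ∀ ε : ℝ, 0 < ε → 2 * ε ≤ min (b1 - a1) (min (a2 - b1) (b2 - a2)) →
        StronglyInterleaved ε A B := by
  constructor
  · exact ⟨not_containedInGap_of_between hb1 hb2 ha2 h2 h3,
      not_containedInGap_of_between ha1 ha2 hb1 h1 h2⟩
  · intro ε hε hmin A' B' hA' hB' hAd hBd
    have hε' : (0:ℝ) ≤ ε := hε.le
    obtain ⟨a1', ha1', hd1⟩ := exists_near_point hA' hε' hAd ha1
    obtain ⟨a2', ha2', hd2⟩ := exists_near_point hA' hε' hAd ha2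
    obtain ⟨b1', hb1', hd3⟩ := exists_near_point hB' hε' hBd hb1
    obtain ⟨b2', hb2', hd4⟩ := exists_near_point hB' hε' hBd hb2
    have g1 : 2 * ε ≤ b1 - a1 := le_trans hmin (min_le_left _ _)
    have g2 : 2 * ε ≤ a2 - b1 := le_trans hmin (le_trans (min_le_right _ _) (min_le_left _ _))
    have g3 : 2 * ε ≤ b2 - a2 := le_trans hmin (le_trans (min_le_right _ _) (min_le_right _ _))
    have e1 := abs_le.1 hd1
    have e2 := abs_le.1 hd2
    have e3 := abs_le.1 hd3
    have e4 := abs_le.1 hd4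
    have k1 : a1' ≤ b1' := by linarith [e1.1, e1.2, e3.1, e3.2]
    have k2 : b1' ≤ a2' := by linarith [e3.1, e3.2, e2.1, e2.2]
    have k3 : a2' ≤ b2' := by linarith [e2.1, e2.2, e4.1, e4.2]
    exact ⟨not_containedInGap_of_between hb1' hb2' ha2' k2 k3,
      not_containedInGap_of_between ha1' ha2' hb1' k1 k2⟩
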